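/- There exists a constant μ ∈ (0,1/2) such that for every r > 0 the helix γ : ℝ → ℝ³ defined by γ(t) = (r cos t, r sin t, μ r t) is self-expanded with respect to the Euclidean norm, i.e., for all t₁ ≤ t₂ ≤ t₃ in ℝ one has ‖γ(t₁) − γ(t₂)‖ ≤ ‖γ(t₁) − γ(t₃)‖. -/

import Mathlib

open scoped RealInnerProductSpace
open Set

/-- The helix `t ↦ (r cos t, r sin t, μ r t)` in `ℝ³`. -/
noncomputable def helix (r μ t : ℝ) : EuclideanSpace ℝ (Fin 3) :=
  WithLp.toLp 2 ![r * Real.cos t, r * Real.sin t, μ * r * t]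

lemma sin_key (s : ℝ) (hs : 0 ≤ s) : 0 ≤ Real.sin s + (0.499 : ℝ)^2 * s := by
  by_cases h1 : s ≤ Real.pi
  · have h := Real.sin_nonneg_of_nonneg_of_le_pi hs h1
    nlinarith
  · push_neg at h1
    by_cases h2 : (1:ℝ) ≤ (0.499:ℝ)^2 * s
    · have := Real.neg_one_le_sin s
      linarith
    · push_neg at h2
      have hpi : (3.0161 : ℝ) ≤ Real.pi := by
        have := Real.pi_gt_d6; linarith
      have hsp : 0 ≤ s - Real.pi := by linarith
      have h3 : Real.sin (s - Real.pi) ≤ s - Real.pi := Real.sin_le hsp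
      have h4 : Real.sin (s - Real.pi) = -Real.sin s := Real.sin_sub_pi s
      have hs1 : s < 1 / (0.499:ℝ)^2 := by
        rw [lt_div_iff₀ (by norm_num)]; linarith
      have hkey : s * (1 - (0.499:ℝ)^2) ≤ Real.pi := by nlinarith
      nlinarith

lemma g_mono : MonotoneOn (fun s : ℝ => 2 - 2 * Real.cos s + (0.499 : ℝ)^2 * s^2) (Ici 0) := by
  apply monotoneOn_of_deriv_nonneg (convex_Ici 0)
  · exact (Continuous.continuousOn (by continuity))
  · intro x _
    apply DifferentiableAt.differentiableWithinAt
    fun_prop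
  · intro x hx
    rw [interior_Ici] at hx
    have hx0 : 0 ≤ x := le_of_lt hx
    have hd : HasDerivAt (fun s : ℝ => 2 - 2 * Real.cos s + (0.499 : ℝ)^2 * s^2)
        (0 - 2 * (-Real.sin x) + (0.499 : ℝ)^2 * (↑2 * x ^ (2 - 1))) x :=
      ((hasDerivAt_const x (2:ℝ)).sub ((Real.hasDerivAt_cos x).const_mul 2)).add
        ((hasDerivAt_pow 2 x).const_mul _)
    rw [hd.deriv]
    have := sin_key x hx0
    nlinarith

lemma helix_norm (r μ a b : ℝ) :
    ‖helix r μ a - helix r μ b‖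
      = Real.sqrt (r^2 * (2 - 2 * Real.cos (b - a) + μ^2 * (b - a)^2)) := by
  rw [EuclideanSpace.norm_eq]
  congr 1
  rw [Fin.sum_univ_three]
  simp only [PiLp.sub_apply, helix, PiLp.toLp_apply, Matrix.cons_val_zero, Matrix.cons_val_one, Matrix.head_cons,
    Matrix.cons_val_two, Matrix.tail_cons, Real.norm_eq_abs, sq_abs, Real.cos_sub]
  nlinarith [Real.sin_sq_add_cos_sq a, Real.sin_sq_add_cos_sq b]

/-- There is `μ ∈ (0,1/2)` such that for every `r > 0` the helix
`t ↦ (r cos t, r sin t, μ r t)` is self-expanded with respect to the Euclidean norm. -/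
theorem exists_mu_helix_selfExpanded :
    ∃ μ : ℝ, 0 < μ ∧ μ < 1 / 2 ∧
      ∀ r : ℝ, 0 < r →
        ∀ t₁ t₂ t₃ : ℝ, t₁ ≤ t₂ → t₂ ≤ t₃ →
          ‖helix r μ t₁ - helix r μ t₂‖ ≤ ‖helix r μ t₁ - helix r μ t₃‖ := by
  refine ⟨0.499, by norm_num, by norm_num, ?_⟩
  intro r hr t₁ t₂ t₃ h12 h23
  rw [helix_norm, helix_norm]
  apply Real.sqrt_le_sqrt
  apply mul_le_mul_of_nonneg_left _ (sq_nonneg r)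
  exact g_mono (mem_Ici.mpr (by linarith)) (mem_Ici.mpr (by linarith)) (by linarith)
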